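/- Assume 1 < α_min < 2, −1 < 2 − α_min − α_sess < 1 and α_sess > 1. Then V(t) ~ σ² t^{4−α_min−α_sess} L_V(t) L_r(t) as t → ∞, where σ² = σ_lim²(3−α_min)(2−α_min) / ((α_sess−1)(3−α_min−α_sess)(4−α_min−α_sess)). -/

import Mathlib

open MeasureTheory Filter Set

/-- A measurable, positive function `L` on `(0,∞)` is slowly varying at infinity if for
every `c > 0`, `L(cx)/L(x) → 1` as `x → ∞`. -/
def SlowlyVarying (L : ℝ → ℝ) : Prop :=
  Measurable L ∧ (∀ x > 0, 0 < L x) ∧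
    ∀ c > 0, Tendsto (fun x => L (c * x) / L x) atTop (nhds 1)

lemma uct_aux (h : ℝ → ℝ) (hmeas : Measurable h)
    (hlim : ∀ u : ℝ, Tendsto (fun t => h (u + t) - h t) atTop (nhds 0))
    {ε : ℝ} (hε : 0 < ε) :
    ∃ T : ℝ, ∀ t ≥ T, ∀ u ∈ Icc (0:ℝ) 2, |h (u + t) - h t| ≤ ε := by
  by_contra hcon
  push_neg at hcon
  choose t0 ht0 u0 hu0 hgt0 using hcon
  set t : ℕ → ℝ := fun n => t0 n with htdef
  set u : ℕ → ℝ := fun n => u0 n with hudef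
  have ht : ∀ n : ℕ, (n:ℝ) ≤ t n := fun n => ht0 (n:ℝ)
  have hu : ∀ n : ℕ, u n ∈ Icc (0:ℝ) 2 := fun n => hu0 (n:ℝ)
  have hgt : ∀ n : ℕ, ε < |h (u n + t n) - h (t n)| := fun n => hgt0 (n:ℝ)
  set Vs : ℕ → Set ℝ := fun n =>
    {w | w ∈ Icc (0:ℝ) 4 ∧ ε/2 ≤ |h (w + t n) - h (t n)|} with hVs
  set Ws : ℕ → Set ℝ := fun n =>
    {v | v ∈ Icc (0:ℝ) 2 ∧ ε/2 ≤ |h (v + (u n + t n)) - h (u n + t n)|} with hWs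
  have htn : Tendsto t atTop atTop :=
    tendsto_atTop_mono ht tendsto_natCast_atTop_atTop
  have hutn : Tendsto (fun n => u n + t n) atTop atTop := by
    apply tendsto_atTop_mono (fun n => ?_) htn
    have := (hu n).1; linarith
  have hmeasV : ∀ n, MeasurableSet (Vs n) := by
    intro n
    apply measurableSet_Icc.inter
    exact measurableSet_le measurable_const
      (((hmeas.comp (measurable_id.add_const (t n))).sub measurable_const).abs)
  have hmeasW : ∀ n, MeasurableSet (Ws n) := by
    intro n
    apply measurableSet_Icc.inter
    exact measurableSet_le measurable_const
      (((hmeas.comp (measurable_id.add_const (u n + t n))).sub measurable_const).abs)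
  have hVol : ∀ (S : ℕ → Set ℝ), (∀ n, MeasurableSet (S n)) → (∀ n, S n ⊆ Icc (0:ℝ) 4) →
      (∀ w : ℝ, ∀ᶠ n in atTop, w ∉ S n) →
      Tendsto (fun n => volume (S n)) atTop (nhds 0) := by
    intro S hSm hSsub hSlim
    have := tendsto_measure_of_tendsto_indicator (μ := volume) (A := (∅ : Set ℝ)) atTop hSm
      measurableSet_Icc (by simp [Real.volume_Icc]) (Eventually.of_forall hSsub) ?_
    · simpa using this
    · intro x
      filter_upwards [hSlim x] with n hn
      simp [hn]
  have habs : ∀ (f : ℕ → ℝ), Tendsto f atTop (nhds 0) → ∀ᶠ n in atTop, |f n| < ε/2 := by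
    intro f hf
    have := Metric.tendsto_nhds.mp hf (ε/2) (by linarith)
    filter_upwards [this] with n hn
    rwa [Real.dist_eq, sub_zero] at hn
  have hVlim : Tendsto (fun n => volume (Vs n)) atTop (nhds 0) := by
    apply hVol _ hmeasV (fun n w hw => hw.1)
    intro w
    filter_upwards [habs _ ((hlim w).comp htn)] with n hn hmem
    exact absurd hmem.2 (by simp only [Function.comp] at hn; linarith)
  have hWlim : Tendsto (fun n => volume (Ws n)) atTop (nhds 0) := by
    apply hVol _ hmeasW (fun n w hw => ⟨hw.1.1, by linarith [hw.1.2]⟩)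
    intro w
    filter_upwards [habs _ ((hlim w).comp hutn)] with n hn hmem
    exact absurd hmem.2 (by simp only [Function.comp] at hn; linarith)
  have hev : ∀ᶠ n in atTop,
      volume (Vs n) < ENNReal.ofReal (1/2) ∧ volume (Ws n) < ENNReal.ofReal (1/2) := by
    have h2 : (0:ENNReal) < ENNReal.ofReal (1/2) := by simp
    exact (hVlim.eventually_lt_const h2).and (hWlim.eventually_lt_const h2)
  obtain ⟨n, hVn, hWn⟩ := hev.exists
  have hcover : Icc (u n) (u n + 2) ⊆ Vs n ∪ ((· + u n) '' Ws n) := by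
    intro w hw
    have hu1 := (hu n).1; have hu2 := (hu n).2
    by_cases hwV : w ∈ Vs n
    · exact Or.inl hwV
    by_cases hvW : (w - u n) ∈ Ws n
    · exact Or.inr ⟨w - u n, hvW, by ring⟩
    exfalso
    have hw4 : w ∈ Icc (0:ℝ) 4 := ⟨by linarith [hw.1], by linarith [hw.2]⟩
    have h1 : |h (w + t n) - h (t n)| < ε/2 := by
      by_contra hc; push_neg at hc; exact hwV ⟨hw4, hc⟩
    have h2 : |h ((w - u n) + (u n + t n)) - h (u n + t n)| < ε/2 := by
      by_contra hc; push_neg at hc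
      exact hvW ⟨⟨by linarith [hw.1], by linarith [hw.2]⟩, hc⟩
    have heq : (w - u n) + (u n + t n) = w + t n := by ring
    rw [heq] at h2
    have htri : |h (u n + t n) - h (t n)| ≤
        |h (u n + t n) - h (w + t n)| + |h (w + t n) - h (t n)| := abs_sub_le _ _ _
    rw [abs_sub_comm (h (u n + t n)) (h (w + t n))] at htri
    linarith [hgt n]
  have himg : volume ((· + u n) '' Ws n) = volume (Ws n) := by
    have himset : ((· + u n) '' Ws n) = (· + (- u n)) ⁻¹' Ws n := by
      ext w
      constructor
      · rintro ⟨v, hv, rfl⟩; simpa using hv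
      · intro hv; exact ⟨w + (- u n), hv, by ring⟩
    rw [himset]
    exact measure_preimage_add_right volume (-u n) (Ws n)
  have hIcc : volume (Icc (u n) (u n + 2)) = ENNReal.ofReal 2 := by
    rw [Real.volume_Icc]; norm_num
  have hle : volume (Icc (u n) (u n + 2)) ≤ volume (Vs n) + volume ((· + u n) '' Ws n) :=
    le_trans (measure_mono hcover) (measure_union_le _ _)
  rw [hIcc, himg] at hle
  have hlt : ENNReal.ofReal 2 < ENNReal.ofReal (1/2) + ENNReal.ofReal (1/2) :=
    lt_of_le_of_lt hle (ENNReal.add_lt_add hVn hWn)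
  rw [← ENNReal.ofReal_add (by norm_num) (by norm_num)] at hlt
  rw [ENNReal.ofReal_lt_ofReal_iff (by norm_num)] at hlt
  norm_num at hlt

/-- Potter bounds for slowly varying functions. -/
lemma potter (L : ℝ → ℝ) (hL : SlowlyVarying L) {δ : ℝ} (hδ : 0 < δ) :
    ∃ X : ℝ, 1 ≤ X ∧ ∀ x y : ℝ, X ≤ x → x ≤ y →
      L y / L x ≤ Real.exp δ * (y/x) ^ δ ∧ L x / L y ≤ Real.exp δ * (y/x) ^ δ := by
  obtain ⟨hLmeas, hLpos, hLslow⟩ := hL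
  set h : ℝ → ℝ := fun s => Real.log (L (Real.exp s)) with hh
  have hmeas : Measurable h := (Real.measurable_log.comp hLmeas).comp Real.measurable_exp
  have hlim : ∀ u : ℝ, Tendsto (fun s => h (u + s) - h s) atTop (nhds 0) := by
    intro u
    have h1 : Tendsto (fun x => L (Real.exp u * x) / L x) atTop (nhds 1) :=
      hLslow _ (Real.exp_pos u)
    have h2 : Tendsto (fun s => L (Real.exp u * Real.exp s) / L (Real.exp s)) atTop (nhds 1) :=
      h1.comp Real.tendsto_exp_atTop
    have h3 := (Real.continuousAt_log (by norm_num : (1:ℝ) ≠ 0)).tendsto.comp h2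
    rw [Real.log_one] at h3
    apply h3.congr
    intro s
    simp only [Function.comp, hh]
    rw [← Real.exp_add u s, ← Real.log_div (ne_of_gt (hLpos _ (Real.exp_pos _)))
      (ne_of_gt (hLpos _ (Real.exp_pos _))), Real.exp_add]
  obtain ⟨T, hT⟩ := uct_aux h hmeas hlim (by positivity : 0 < δ/2)
  -- chained bound
  have key : ∀ m : ℕ, ∀ a b : ℝ, T ≤ a → a ≤ b → b - a ≤ 2*(m+1) → |h b - h a| ≤ (δ/2)*(m+1) := by
    intro m
    induction m with
    | zero =>
      intro a b hTa hab hba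
      have := hT a hTa (b - a) ⟨by linarith, by norm_num at hba; linarith⟩
      simpa [sub_add_cancel] using this
    | succ m ih =>
      intro a b hTa hab hba
      by_cases hcase : b - a ≤ 2*(m+1)
      · have := ih a b hTa hab hcase
        have hnn : (0:ℝ) ≤ δ/2 := by linarith
        have hnn2 : (0:ℝ) ≤ (m:ℝ) + 1 := by positivity
        calc |h b - h a| ≤ (δ/2)*(m+1) := this
          _ ≤ (δ/2)*((m:ℝ)+1+1) := by nlinarith
          _ = (δ/2)*((↑(m+1):ℝ)+1) := by push_cast; ring
      · push_neg at hcase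
        set c : ℝ := b - 2 with hc
        have hac : a ≤ c := by
          have : (2:ℝ) ≤ 2*(m+1) := by nlinarith [Nat.cast_nonneg' (α := ℝ) m]
          simp only [hc]; linarith
        have h1 : |h c - h a| ≤ (δ/2)*(m+1) := ih a c hTa hac (by push_cast at hba ⊢; simp only [hc]; linarith)
        have h2 : |h b - h c| ≤ δ/2 := by
          have := hT c (le_trans hTa hac) 2 ⟨by norm_num, le_refl 2⟩
          simpa [hc, show (2:ℝ) + (b - 2) = b by ring] using this
        calc |h b - h a| ≤ |h b - h c| + |h c - h a| := abs_sub_le _ _ _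
          _ ≤ δ/2 + (δ/2)*(m+1) := add_le_add h2 h1
          _ = (δ/2)*((↑(m+1):ℝ)+1) := by push_cast; ring
  have main : ∀ a b : ℝ, T ≤ a → a ≤ b → |h b - h a| ≤ δ/2 + (δ/2)*((b-a)/2) := by
    intro a b hTa hab
    set m : ℕ := ⌊(b-a)/2⌋₊ with hm
    have hnn : (0:ℝ) ≤ (b-a)/2 := by linarith
    have h1 : (m:ℝ) ≤ (b-a)/2 := Nat.floor_le hnn
    have h2 : (b-a)/2 < m + 1 := Nat.lt_floor_add_one _
    have := key m a b hTa hab (by linarith)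
    calc |h b - h a| ≤ (δ/2)*(m+1) := this
      _ ≤ δ/2 + (δ/2)*((b-a)/2) := by nlinarith
  refine ⟨max (Real.exp T) 1, le_max_right _ _, ?_⟩
  intro x y hXx hxy
  have hx0 : (0:ℝ) < x := lt_of_lt_of_le zero_lt_one (le_trans (le_max_right _ _) hXx)
  have hy0 : (0:ℝ) < y := lt_of_lt_of_le hx0 hxy
  have hTlx : T ≤ Real.log x := by
    rw [← Real.log_exp T]
    exact Real.log_le_log (Real.exp_pos T) (le_trans (le_max_left _ _) hXx)
  have hlxy : Real.log x ≤ Real.log y := Real.log_le_log hx0 hxy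
  have hmain := main (Real.log x) (Real.log y) hTlx hlxy
  have hhx : h (Real.log x) = Real.log (L x) := by simp [hh, Real.exp_log hx0]
  have hhy : h (Real.log y) = Real.log (L y) := by simp [hh, Real.exp_log hy0]
  rw [hhx, hhy] at hmain
  have hdiv : Real.log y - Real.log x = Real.log (y/x) := (Real.log_div (ne_of_gt hy0) (ne_of_gt hx0)).symm
  have hBexp : Real.exp (δ/2 + (δ/2)*((Real.log y - Real.log x)/2)) ≤ Real.exp δ * (y/x)^δ := by
    rw [Real.exp_add, hdiv]
    have hyx1 : (1:ℝ) ≤ y/x := (one_le_div hx0).mpr hxy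
    have hyx0 : (0:ℝ) < y/x := by linarith
    have hrw : Real.exp ((δ/2) * (Real.log (y/x)/2)) = (y/x) ^ (δ/4) := by
      rw [Real.rpow_def_of_pos hyx0]; congr 1; ring
    rw [hrw]
    apply mul_le_mul
    · exact Real.exp_le_exp.mpr (by linarith)
    · exact Real.rpow_le_rpow_of_exponent_le hyx1 (by linarith)
    · positivity
    · positivity
  have hLxpos := hLpos x hx0
  have hLypos := hLpos y hy0
  constructor
  · have h1 : Real.log (L y) - Real.log (L x) ≤ δ/2 + (δ/2)*((Real.log y - Real.log x)/2) :=
      le_trans (le_abs_self _) hmain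
    have : L y / L x = Real.exp (Real.log (L y) - Real.log (L x)) := by
      rw [Real.exp_sub, Real.exp_log hLypos, Real.exp_log hLxpos]
    rw [this]
    exact le_trans (Real.exp_le_exp.mpr h1) hBexp
  · have h1 : Real.log (L x) - Real.log (L y) ≤ δ/2 + (δ/2)*((Real.log y - Real.log x)/2) := by
      have hna := neg_abs_le (Real.log (L y) - Real.log (L x))
      linarith [hmain]
    have : L x / L y = Real.exp (Real.log (L x) - Real.log (L y)) := by
      rw [Real.exp_sub, Real.exp_log hLxpos, Real.exp_log hLypos]
    rw [this]
    exact le_trans (Real.exp_le_exp.mpr h1) hBexp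

/-- A regularly varying function of positive index tends to infinity. -/
lemma rpow_mul_sv_atTop (L : ℝ → ℝ) (hL : SlowlyVarying L) {p : ℝ} (hp : 0 < p) :
    Tendsto (fun t => t ^ p * L t) atTop atTop := by
  obtain ⟨X, hX1, hP⟩ := potter L hL (show 0 < p/2 by positivity)
  have hX0 : (0:ℝ) < X := lt_of_lt_of_le zero_lt_one hX1
  have hLX := hL.2.1 X hX0
  set c : ℝ := L X * (Real.exp (p/2))⁻¹ * X ^ (p/2) with hc
  have hcpos : 0 < c := by positivity
  have hbig : Tendsto (fun t => c * t ^ (p - p/2)) atTop atTop :=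
    (tendsto_rpow_atTop (by linarith)).const_mul_atTop hcpos
  apply tendsto_atTop_mono' _ _ hbig
  filter_upwards [eventually_ge_atTop X] with t hXt
  have ht0 : 0 < t := lt_of_lt_of_le hX0 hXt
  have h2 := (hP X t (le_refl X) hXt).2
  -- L X / L t ≤ e^{p/2} (t/X)^{p/2}  ⟹  L t ≥ ...
  have hLt := hL.2.1 t ht0
  have hfrac : (0:ℝ) < (t/X) ^ (p/2) := Real.rpow_pos_of_pos (by positivity) _
  have hLlow : L X * (Real.exp (p/2))⁻¹ * ((t/X) ^ (p/2))⁻¹ ≤ L t := by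
    rw [div_le_iff₀ hLt] at h2
    rw [mul_comm (Real.exp (p/2)) _] at h2
    have h3 : L X / ((t/X)^(p/2) * Real.exp (p/2)) ≤ L t := by
      rw [div_le_iff₀ (by positivity : (0:ℝ) < (t/X)^(p/2) * Real.exp (p/2))]
      linarith
    calc L X * (Real.exp (p/2))⁻¹ * ((t/X) ^ (p/2))⁻¹
        = L X / ((t/X)^(p/2) * Real.exp (p/2)) := by ring
      _ ≤ L t := h3
  have hrw : (t/X) ^ (p/2) = t ^ (p/2) / X ^ (p/2) := Real.div_rpow (le_of_lt ht0) (le_of_lt hX0) (p/2)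
  calc c * t ^ (p - p/2) = t ^ p * (L X * (Real.exp (p/2))⁻¹ * ((t/X) ^ (p/2))⁻¹) := by
        rw [hrw, Real.rpow_sub ht0, hc, inv_div]
        have h1 : t ^ (p/2) ≠ 0 := ne_of_gt (Real.rpow_pos_of_pos ht0 _)
        have h2 : X ^ (p/2) ≠ 0 := ne_of_gt (Real.rpow_pos_of_pos hX0 _)
        field_simp
    _ ≤ t ^ p * L t := by
        apply mul_le_mul_of_nonneg_left hLlow (le_of_lt (Real.rpow_pos_of_pos ht0 p))

lemma aesm_comp_mul {f : ℝ → ℝ} (hf : AEStronglyMeasurable f (volume : Measure ℝ))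
    {t : ℝ} (ht : t ≠ 0) :
    AEStronglyMeasurable (fun s => f (t * s)) (volume : Measure ℝ) := by
  obtain ⟨g, hg, hfg⟩ := hf
  refine ⟨fun s => g (t * s),
    (hg.measurable.comp (measurable_const_mul t)).stronglyMeasurable, ?_⟩
  obtain ⟨N, hNsub, hNmeas, hN0⟩ := exists_measurable_superset_of_null (ae_iff.mp hfg)
  have hpre : volume ((t * ·) ⁻¹' N) = 0 := by
    rw [← Measure.map_apply (measurable_const_mul t) hNmeas, Real.map_volume_mul_left ht]
    simp [hN0]
  refine ae_iff.mpr (measure_mono_null ?_ hpre)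
  intro s hs
  exact hNsub hs

/-- Direct half of Karamata's theorem. -/
lemma karamata (ℓ : ℝ → ℝ) (hℓ : SlowlyVarying ℓ) {ρ A : ℝ} (hρ : -1 < ρ)
    (f : ℝ → ℝ) (hf_meas : AEStronglyMeasurable f (volume : Measure ℝ))
    (hf_int : ∀ t : ℝ, 0 < t → IntervalIntegrable f volume 0 t)
    (hf : Tendsto (fun x => f x / (x ^ ρ * ℓ x)) atTop (nhds A)) :
    Tendsto (fun t => (∫ x in (0:ℝ)..t, f x) / (t ^ (ρ+1) * ℓ t)) atTop (nhds (A/(ρ+1))) := by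
  have hℓpos := hℓ.2.1
  set δ : ℝ := (ρ+1)/2 with hδdef
  have hδ : 0 < δ := by simp only [hδdef]; linarith
  obtain ⟨X₀, hX₀1, hP⟩ := potter ℓ hℓ hδ
  have hfev : ∀ᶠ x in atTop, |f x / (x ^ ρ * ℓ x)| ≤ |A| + 1 := by
    filter_upwards [hf.abs.eventually_lt_const (by linarith : |A| < |A| + 1)] with x hx
    exact le_of_lt hx
  obtain ⟨X₁, hX₁⟩ := eventually_atTop.mp hfev
  set X : ℝ := max X₀ X₁ with hXdef
  have hX1 : (1:ℝ) ≤ X := le_trans hX₀1 (le_max_left _ _)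
  have hX0 : (0:ℝ) < X := lt_of_lt_of_le zero_lt_one hX1
  -- denominator tends to infinity
  have hD : Tendsto (fun t => t ^ (ρ+1) * ℓ t) atTop atTop := rpow_mul_sv_atTop ℓ hℓ (by linarith)
  -- bound on |f|
  have hfbound : ∀ x : ℝ, X ≤ x → |f x| ≤ (|A| + 1) * (x ^ ρ * ℓ x) := by
    intro x hXx
    have hx0 : 0 < x := lt_of_lt_of_le hX0 hXx
    have hden : 0 < x ^ ρ * ℓ x := mul_pos (Real.rpow_pos_of_pos hx0 ρ) (hℓpos x hx0)
    have := hX₁ x (le_trans (le_max_right _ _) hXx)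
    rw [abs_div, abs_of_pos hden, div_le_iff₀ hden] at this
    exact this
  -- the indicator integrand
  set G : ℝ → ℝ → ℝ := fun t s => (Ioi (X/t)).indicator (fun s => f (t*s) / (t ^ ρ * ℓ t)) s
    with hGdef
  -- key convergence via dominated convergence
  have hbound_int : IntegrableOn (fun s => (|A| + 1) * Real.exp δ * s ^ (ρ - δ)) (Ioc (0:ℝ) 1) := by
    have h1 : IntervalIntegrable (fun s : ℝ => s ^ (ρ - δ)) volume 0 1 :=
      intervalIntegral.intervalIntegrable_rpow' (by simp only [hδdef]; linarith)
    have h2 := (intervalIntegrable_iff_integrableOn_Ioc_of_le zero_le_one).mp h1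
    exact h2.const_mul _
  have hmain : Tendsto (fun t => ∫ s in Ioc (0:ℝ) 1, G t s) atTop
      (nhds (∫ s in Ioc (0:ℝ) 1, A * s ^ ρ)) := by
    apply tendsto_integral_filter_of_dominated_convergence
      (fun s => (|A| + 1) * Real.exp δ * s ^ (ρ - δ))
    · -- measurability
      filter_upwards [eventually_ge_atTop X] with t hXt
      have ht0 : 0 < t := lt_of_lt_of_le hX0 hXt
      have h1 : AEStronglyMeasurable (fun s => f (t*s) / (t ^ ρ * ℓ t)) volume := by
        simpa [div_eq_mul_inv] using
          (aesm_comp_mul hf_meas (ne_of_gt ht0)).mul_const (t ^ ρ * ℓ t)⁻¹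
      exact (h1.indicator measurableSet_Ioi).restrict
    · -- dominated
      filter_upwards [eventually_ge_atTop X] with t hXt
      have ht0 : 0 < t := lt_of_lt_of_le hX0 hXt
      refine (ae_restrict_iff' measurableSet_Ioc).mpr (Eventually.of_forall ?_)
      intro s hs
      obtain ⟨hs0, hs1⟩ := hs
      by_cases hmem : s ∈ Ioi (X/t)
      · have hts : X < t * s := by
          rw [mem_Ioi, div_lt_iff₀ ht0] at hmem
          linarith [hmem]
        have hts0 : 0 < t * s := lt_trans hX0 hts
        have htst : t * s ≤ t := by nlinarith
        have hden : 0 < t ^ ρ * ℓ t := mul_pos (Real.rpow_pos_of_pos ht0 ρ)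
          (hℓpos t ht0)
        rw [hGdef]
        simp only [indicator_of_mem hmem]
        rw [Real.norm_eq_abs, abs_div, abs_of_pos hden]
        have h1 : |f (t*s)| ≤ (|A| + 1) * ((t*s) ^ ρ * ℓ (t*s)) := hfbound _ (le_of_lt hts)
        have h2 : ℓ (t*s) / ℓ t ≤ Real.exp δ * (t/(t*s)) ^ δ :=
          (hP (t*s) t (le_trans (le_max_left _ _) (le_of_lt hts)) htst).2
        have hℓts := hℓpos (t*s) hts0
        have hℓt := hℓpos t ht0
        have hrw1 : (t/(t*s)) = s⁻¹ := by field_simp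
        have hrw2 : ((s:ℝ)⁻¹) ^ δ = (s ^ δ)⁻¹ := Real.inv_rpow (le_of_lt hs0) δ
        have hrw3 : (t*s) ^ ρ = t ^ ρ * s ^ ρ := Real.mul_rpow (le_of_lt ht0) (le_of_lt hs0)
        have hsδ : 0 < s ^ δ := Real.rpow_pos_of_pos hs0 δ
        have hsρ : 0 < s ^ ρ := Real.rpow_pos_of_pos hs0 ρ
        have htρ : 0 < t ^ ρ := Real.rpow_pos_of_pos ht0 ρ
        have hrw4 : s ^ (ρ - δ) = s ^ ρ / s ^ δ := Real.rpow_sub hs0 ρ δ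
        calc |f (t*s)| / (t ^ ρ * ℓ t)
            ≤ ((|A| + 1) * ((t*s) ^ ρ * ℓ (t*s))) / (t ^ ρ * ℓ t) := by
              exact div_le_div_of_nonneg_right h1 hden.le
          _ = (|A| + 1) * s ^ ρ * (ℓ (t*s) / ℓ t) := by
              rw [hrw3]; field_simp
          _ ≤ (|A| + 1) * s ^ ρ * (Real.exp δ * (t/(t*s)) ^ δ) := by
              apply mul_le_mul_of_nonneg_left h2
              positivity
          _ = (|A| + 1) * Real.exp δ * s ^ (ρ - δ) := by
              rw [hrw1, hrw2, hrw4]; field_simp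
      · rw [hGdef]
        simp only [indicator_of_notMem hmem]
        rw [Real.norm_eq_abs, abs_zero]
        positivity
    · exact hbound_int
    · -- pointwise convergence
      refine (ae_restrict_iff' measurableSet_Ioc).mpr (Eventually.of_forall ?_)
      intro s hs
      obtain ⟨hs0, hs1⟩ := hs
      have hPt : Tendsto (fun t => (f (t*s) / ((t*s) ^ ρ * ℓ (t*s))) * (ℓ (s*t) / ℓ t) * s ^ ρ)
          atTop (nhds (A * s ^ ρ)) := by
        have h1 : Tendsto (fun t : ℝ => t * s) atTop atTop :=
          Tendsto.atTop_mul_const hs0 tendsto_id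
        have h2 : Tendsto (fun t => f (t*s) / ((t*s) ^ ρ * ℓ (t*s))) atTop (nhds A) := hf.comp h1
        have h3 : Tendsto (fun t => ℓ (s*t) / ℓ t) atTop (nhds 1) := hℓ.2.2 s hs0
        have := (h2.mul h3).mul_const (s ^ ρ)
        simpa using this
      apply hPt.congr'
      filter_upwards [eventually_gt_atTop (X/s), eventually_ge_atTop X] with t hts hXt
      have ht0 : 0 < t := lt_of_lt_of_le hX0 hXt
      have hmem : s ∈ Ioi (X/t) := by
        rw [mem_Ioi, div_lt_iff₀ ht0, mul_comm]
        rw [div_lt_iff₀ hs0] at hts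
        exact hts
      rw [hGdef]
      simp only [indicator_of_mem hmem]
      have hts0 : 0 < t * s := mul_pos ht0 hs0
      have hrw3 : (t*s) ^ ρ = t ^ ρ * s ^ ρ := Real.mul_rpow (le_of_lt ht0) (le_of_lt hs0)
      have hcomm : ℓ (s*t) = ℓ (t*s) := by rw [mul_comm]
      have hℓts := hℓpos (t*s) hts0
      have hℓt := hℓpos t ht0
      have hsρ : 0 < s ^ ρ := Real.rpow_pos_of_pos hs0 ρ
      have htρ : 0 < t ^ ρ := Real.rpow_pos_of_pos ht0 ρ
      rw [hcomm, hrw3]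
      field_simp
  -- identify the limit integral
  have hlimint : (∫ s in Ioc (0:ℝ) 1, A * s ^ ρ) = A / (ρ+1) := by
    rw [MeasureTheory.integral_const_mul]
    rw [← intervalIntegral.integral_of_le zero_le_one]
    rw [integral_rpow (Or.inl hρ)]
    rw [Real.one_rpow, Real.zero_rpow (by intro hc; linarith : ρ + 1 ≠ 0)]
    ring
  rw [hlimint] at hmain
  -- rewrite our function eventually as sum of vanishing part and the DCT part
  have hzero : Tendsto (fun t => (∫ x in (0:ℝ)..X, f x) / (t ^ (ρ+1) * ℓ t)) atTop (nhds 0) :=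
    Tendsto.div_atTop tendsto_const_nhds hD
  have hfinal := hzero.add hmain
  rw [zero_add] at hfinal
  apply hfinal.congr'
  filter_upwards [eventually_ge_atTop X, eventually_ge_atTop (1:ℝ)] with t hXt ht1
  have ht0 : 0 < t := lt_of_lt_of_le hX0 hXt
  -- split the integral
  have hii0X : IntervalIntegrable f volume 0 X := hf_int X hX0
  have hiiXt : IntervalIntegrable f volume X t := by
    apply (hf_int t ht0).mono_set
    rw [uIcc_of_le hXt, uIcc_of_le (le_of_lt ht0)]
    exact Icc_subset_Icc (le_of_lt hX0) le_rfl
  have hsplit : (∫ x in (0:ℝ)..t, f x) = (∫ x in (0:ℝ)..X, f x) + ∫ x in X..t, f x :=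
    (intervalIntegral.integral_add_adjacent_intervals hii0X hiiXt).symm
  -- change of variables on the second piece
  have hXtt : X / t ≤ 1 := by rw [div_le_one ht0]; exact hXt
  have hchange : (∫ x in X..t, f x) = t * ∫ s in (X/t)..(1:ℝ), f (t * s) := by
    rw [intervalIntegral.integral_comp_mul_left (fun x => f x) (ne_of_gt ht0)]
    rw [mul_div_cancel₀ _ (ne_of_gt ht0), mul_one]
    rw [smul_eq_mul, ← mul_assoc, mul_inv_cancel₀ (ne_of_gt ht0), one_mul]
  -- express as indicator integral
  have hind : (∫ s in Ioc (0:ℝ) 1, G t s) = ∫ s in (X/t)..(1:ℝ), f (t * s) / (t ^ ρ * ℓ t) := by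
    have hset : Ioi (X/t) ∩ Ioc (0:ℝ) 1 = Ioc (X/t) 1 := by
      ext s
      simp only [mem_inter_iff, mem_Ioi, mem_Ioc]
      constructor
      · rintro ⟨h1, _, h3⟩; exact ⟨h1, h3⟩
      · rintro ⟨h1, h3⟩; exact ⟨h1, lt_of_le_of_lt (by positivity : (0:ℝ) ≤ X/t) h1, h3⟩
    rw [hGdef]
    rw [MeasureTheory.integral_indicator measurableSet_Ioi]
    rw [Measure.restrict_restrict measurableSet_Ioi, hset]
    rw [intervalIntegral.integral_of_le hXtt]
  have hdenpos : 0 < t ^ (ρ+1) * ℓ t :=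
    mul_pos (Real.rpow_pos_of_pos ht0 _) (hℓpos t ht0)
  have htρ1 : t ^ (ρ+1) = t ^ ρ * t := by
    rw [Real.rpow_add ht0, Real.rpow_one]
  have hℓt := hℓpos t ht0
  have htρ : 0 < t ^ ρ := Real.rpow_pos_of_pos ht0 ρ
  have h2 : (∫ x in X..t, f x) / (t ^ (ρ+1) * ℓ t) = ∫ s in Ioc (0:ℝ) 1, G t s := by
    rw [hind, hchange, intervalIntegral.integral_div, htρ1,
      show t ^ ρ * t * ℓ t = t * (t ^ ρ * ℓ t) by ring,
      mul_div_mul_left _ _ (ne_of_gt ht0)]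
  rw [hsplit, add_div, h2]

/-- Karamata's theorem for tail integrals. -/
lemma tail_karamata (L : ℝ → ℝ) (hL : SlowlyVarying L) {α : ℝ} (hα : 1 < α)
    (Hbar : ℝ → ℝ) (hHbar_meas : Measurable Hbar) (hHbar_nn : ∀ x, 0 ≤ Hbar x)
    (hHbar : ∀ x > (0:ℝ), Hbar x = x ^ (-α) * L x) :
    Tendsto (fun x => (∫ z in Ioi x, Hbar z) / (x ^ (1-α) * L x)) atTop (nhds (1/(α-1))) := by
  have hLpos := hL.2.1
  set δ : ℝ := (α-1)/2 with hδdef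
  have hδ : 0 < δ := by simp only [hδdef]; linarith
  obtain ⟨X₀, hX₀1, hP⟩ := potter L hL hδ
  set G : ℝ → ℝ → ℝ := fun x s => Hbar (x*s) * (x ^ α / L x) with hGdef
  have hexp_lt : -α + δ < -1 := by simp only [hδdef]; linarith
  have hmain : Tendsto (fun x => ∫ s in Ioi (1:ℝ), G x s) atTop
      (nhds (∫ s in Ioi (1:ℝ), s ^ (-α))) := by
    apply tendsto_integral_filter_of_dominated_convergence
      (fun s => Real.exp δ * s ^ (-α + δ))
    · filter_upwards [eventually_gt_atTop (0:ℝ)] with x hx0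
      exact (((hHbar_meas.comp (measurable_const_mul x)).aestronglyMeasurable).mul_const
        _).restrict
    · filter_upwards [eventually_ge_atTop X₀] with x hXx
      have hx0 : 0 < x := lt_of_lt_of_le (lt_of_lt_of_le zero_lt_one hX₀1) hXx
      refine (ae_restrict_iff' measurableSet_Ioi).mpr (Eventually.of_forall ?_)
      intro s hs
      rw [mem_Ioi] at hs
      have hs0 : 0 < s := lt_trans zero_lt_one hs
      have hxs0 : 0 < x * s := mul_pos hx0 hs0
      have hxxs : x ≤ x * s := by nlinarith
      have hLx := hLpos x hx0
      have hLxs := hLpos (x*s) hxs0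
      have hG : G x s = s ^ (-α) * (L (x*s) / L x) := by
        rw [hGdef]
        simp only
        rw [hHbar (x*s) hxs0, Real.mul_rpow (le_of_lt hx0) (le_of_lt hs0)]
        have hxα : x ^ (-α) * x ^ α = 1 := by
          rw [← Real.rpow_add hx0]; simp
        rw [show x ^ (-α) * s ^ (-α) * L (x*s) * (x ^ α / L x)
            = (x ^ (-α) * x ^ α) * (s ^ (-α) * (L (x*s) / L x)) from by ring, hxα, one_mul]
      have hpot := (hP x (x*s) hXx hxxs).1
      have hfrac : (x*s)/x = s := by field_simp
      rw [hfrac] at hpot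
      rw [Real.norm_eq_abs, hG, abs_of_nonneg (by positivity)]
      calc s ^ (-α) * (L (x*s) / L x) ≤ s ^ (-α) * (Real.exp δ * s ^ δ) := by
            apply mul_le_mul_of_nonneg_left hpot (by positivity)
        _ = Real.exp δ * s ^ (-α + δ) := by
            rw [Real.rpow_add hs0]; ring
    · exact (integrableOn_Ioi_rpow_of_lt hexp_lt zero_lt_one).const_mul _
    · refine (ae_restrict_iff' measurableSet_Ioi).mpr (Eventually.of_forall ?_)
      intro s hs
      rw [mem_Ioi] at hs
      have hs0 : 0 < s := lt_trans zero_lt_one hs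
      have h3 : Tendsto (fun x => L (s*x) / L x) atTop (nhds 1) := hL.2.2 s hs0
      have := h3.const_mul (s ^ (-α))
      rw [mul_one] at this
      apply this.congr'
      filter_upwards [eventually_gt_atTop (0:ℝ)] with x hx0
      have hxs0 : 0 < x * s := mul_pos hx0 hs0
      have hLx := hLpos x hx0
      rw [hGdef]
      simp only
      rw [hHbar (x*s) hxs0, Real.mul_rpow (le_of_lt hx0) (le_of_lt hs0)]
      have hxα : x ^ (-α) * x ^ α = 1 := by
        rw [← Real.rpow_add hx0]; simp
      rw [mul_comm s x,
        show x ^ (-α) * s ^ (-α) * L (x*s) * (x ^ α / L x)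
            = (x ^ (-α) * x ^ α) * (s ^ (-α) * (L (x*s) / L x)) from by ring, hxα, one_mul]
  have hlimint : (∫ s in Ioi (1:ℝ), s ^ (-α)) = 1/(α-1) := by
    rw [integral_Ioi_rpow_of_lt (by linarith) zero_lt_one]
    rw [Real.one_rpow]
    rw [show (-α + 1 : ℝ) = -(α - 1) by ring]
    rw [div_neg, neg_div, neg_neg]
  rw [hlimint] at hmain
  apply hmain.congr'
  filter_upwards [eventually_gt_atTop (0:ℝ)] with x hx0
  have hLx := hLpos x hx0
  have hchange : (∫ z in Ioi x, Hbar z) = x * ∫ s in Ioi (1:ℝ), Hbar (x * s) := by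
    rw [MeasureTheory.integral_comp_mul_left_Ioi Hbar 1 hx0, mul_one, smul_eq_mul,
      ← mul_assoc, mul_inv_cancel₀ (ne_of_gt hx0), one_mul]
  have hint : ∫ s in Ioi (1:ℝ), G x s = (∫ s in Ioi (1:ℝ), Hbar (x * s)) * (x ^ α / L x) := by
    rw [hGdef]
    exact MeasureTheory.integral_mul_const _ _
  rw [hint, hchange]
  have hx1α : x ^ (1-α) = x / x ^ α := by
    rw [Real.rpow_sub hx0, Real.rpow_one]
  rw [hx1α]
  have hxα : 0 < x ^ α := Real.rpow_pos_of_pos hx0 α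
  field_simp

lemma sv_mul {L1 L2 : ℝ → ℝ} (h1 : SlowlyVarying L1) (h2 : SlowlyVarying L2) :
    SlowlyVarying (fun x => L1 x * L2 x) := by
  refine ⟨h1.1.mul h2.1, fun x hx => mul_pos (h1.2.1 x hx) (h2.2.1 x hx), ?_⟩
  intro c hc
  have := (h1.2.2 c hc).mul (h2.2.2 c hc)
  rw [mul_one] at this
  apply this.congr'
  filter_upwards [eventually_gt_atTop (0:ℝ)] with x hx0
  have hcx : 0 < c * x := mul_pos hc hx0
  have h1x := h1.2.1 x hx0
  have h2x := h2.2.1 x hx0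
  field_simp

/-- Case 3 of the variance lemma: if `1 < α_min < 2`,
`−1 < 2 − α_min − α_sess < 1` and `α_sess > 1`, then
`V(t) ~ σ² t^{4−α_min−α_sess} L_V(t) L_r(t)` as `t → ∞`, where
`σ² = σ_lim²(3−α_min)(2−α_min)/((α_sess−1)(3−α_min−α_sess)(4−α_min−α_sess))` and
`V(t) = 2∫₀^t∫₀^y r(x) H̄_I(x) dx dy`. -/
theorem variance_asymptotics_case3
    (αmin αsess μmax μW : ℝ)
    (hαmin : 1 < αmin ∧ αmin < 2)
    (hcase : -1 < 2 - αmin - αsess ∧ 2 - αmin - αsess < 1)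
    (hαsess : 1 < αsess)
    (hμmax : 0 < μmax) (hμW : 0 < μW)
    (σlim2 : ℝ)
    (hσlim2 : σlim2 = 2 * μmax ^ 2 / (μW ^ 3 * (αmin - 1) * (3 - αmin) * (2 - αmin)))
    (L_r L_V : ℝ → ℝ) (hLr : SlowlyVarying L_r) (hLV : SlowlyVarying L_V)
    -- the autocovariance `r` of the stationary on-off process
    (r : ℝ → ℝ) (hr_cont : ContinuousOn r (Set.Ici 0))
    (hr : ∀ u > (0:ℝ), r u = σlim2 / 2 * (3 - αmin) * (2 - αmin) * u ^ (1 - αmin) * L_r u)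
    -- the survival function `H̄` of the lifetime distribution, with finite mean
    (Hbar : ℝ → ℝ) (hHbar_meas : Measurable Hbar)
    (hHbar_nn : ∀ x, 0 ≤ Hbar x) (hHbar_le : ∀ x > (0:ℝ), Hbar x ≤ 1)
    (hHbar : ∀ x > (0:ℝ), Hbar x = x ^ (-αsess) * L_V x)
    (hHbar_int : IntegrableOn Hbar (Set.Ioi 0))
    -- the integrated tail `H̄_I`
    (HbarI : ℝ → ℝ) (hHbarI : ∀ x, HbarI x = ∫ z in Set.Ioi x, Hbar z)
    -- the variance of the integrated process
    (V : ℝ → ℝ)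
    (hV : ∀ t, V t = 2 * ∫ y in (0:ℝ)..t, ∫ x in (0:ℝ)..y, r x * HbarI x)
    (σ2 : ℝ)
    (hσ2 : σ2 = σlim2 * (3 - αmin) * (2 - αmin)
      / ((αsess - 1) * (3 - αmin - αsess) * (4 - αmin - αsess))) :
    Tendsto (fun t => V t / (σ2 * t ^ (4 - αmin - αsess) * L_V t * L_r t))
      atTop (nhds 1) := by
  obtain ⟨hαmin1, hαmin2⟩ := hαmin
  obtain ⟨hρ1, hρ2⟩ := hcase
  set ρ : ℝ := 2 - αmin - αsess with hρdef
  -- positivity of constants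
  have hσlim2pos : 0 < σlim2 := by
    rw [hσlim2]
    apply div_pos (by positivity)
    have h1 : 0 < μW ^ 3 := by positivity
    have h2 : (0:ℝ) < αmin - 1 := by linarith
    have h3 : (0:ℝ) < 3 - αmin := by linarith
    have h4 : (0:ℝ) < 2 - αmin := by linarith
    positivity
  set K : ℝ := σlim2 / 2 * (3 - αmin) * (2 - αmin) with hKdef
  have hKpos : 0 < K := by
    have h3 : (0:ℝ) < 3 - αmin := by linarith
    have h4 : (0:ℝ) < 2 - αmin := by linarith
    positivity
  set ℓ : ℝ → ℝ := fun x => L_V x * L_r x with hℓdef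
  have hℓsv : SlowlyVarying ℓ := sv_mul hLV hLr
  -- the tail asymptotics of HbarI
  have htail : Tendsto (fun x => HbarI x / (x ^ (1-αsess) * L_V x)) atTop
      (nhds (1/(αsess-1))) := by
    have := tail_karamata L_V hLV hαsess Hbar hHbar_meas hHbar_nn hHbar
    simp only [← hHbarI] at this
    exact this
  -- measurability of HbarI on the positive axis
  set W : ℝ → ℝ := fun x => ∫ z in Ioi (max x 0), Hbar z with hWdef
  have hWanti : Antitone W := by
    intro a b hab
    apply setIntegral_mono_set
      (hHbar_int.mono_set (Ioi_subset_Ioi (le_max_right a 0)))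
      (Eventually.of_forall (fun z => hHbar_nn z))
      (HasSubset.Subset.eventuallyLE (Ioi_subset_Ioi (max_le_max hab le_rfl)))
  have hWmeas : Measurable W := hWanti.measurable
  have hHbarIW : ∀ x ∈ Ioi (0:ℝ), HbarI x = W x := by
    intro x hx
    rw [hHbarI, hWdef]
    simp only
    rw [max_eq_left (le_of_lt hx)]
  have hHbarI_meas : AEMeasurable HbarI (volume.restrict (Ioi 0)) := by
    apply hWmeas.aemeasurable.congr
    exact (ae_restrict_iff' measurableSet_Ioi).mpr
      (Eventually.of_forall (fun x hx => (hHbarIW x hx).symm))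
  have hr_meas : AEMeasurable r (volume.restrict (Ioi 0)) :=
    (hr_cont.mono Ioi_subset_Ici_self).aemeasurable measurableSet_Ioi
  set f₁ : ℝ → ℝ := (Ioi (0:ℝ)).indicator (fun x => r x * HbarI x) with hf₁def
  have hf₁_meas : AEStronglyMeasurable f₁ volume := by
    have h := hr_meas.mul hHbarI_meas
    exact ((aemeasurable_indicator_iff measurableSet_Ioi).mpr h).aestronglyMeasurable
  -- bounds on HbarI
  set M : ℝ := ∫ z in Ioi (0:ℝ), Hbar z with hMdef
  have hHbarI_bds : ∀ x : ℝ, 0 < x → 0 ≤ HbarI x ∧ HbarI x ≤ M := by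
    intro x hx
    constructor
    · rw [hHbarI]
      exact setIntegral_nonneg measurableSet_Ioi (fun z _ => hHbar_nn z)
    · rw [hHbarI, hMdef]
      exact setIntegral_mono_set hHbar_int
        (Eventually.of_forall (fun z => hHbar_nn z))
        (HasSubset.Subset.eventuallyLE (Ioi_subset_Ioi (le_of_lt hx)))
  -- interval integrability of f₁ on every interval
  have hf₁_int : ∀ a b : ℝ, IntervalIntegrable f₁ volume a b := by
    intro a b
    rw [intervalIntegrable_iff]
    set c : ℝ := max (max a b) 0 with hcdef
    obtain ⟨C, hC⟩ := (isCompact_Icc (a := (0:ℝ)) (b := c)).exists_bound_of_continuousOn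
      (hr_cont.mono (fun x hx => hx.1))
    have hM0 : 0 ≤ M := by
      rw [hMdef]
      exact setIntegral_nonneg measurableSet_Ioi (fun z _ => hHbar_nn z)
    apply Integrable.mono' (g := fun _ => (max C 0) * M)
      ((integrableOn_const_iff).mpr (Or.inr measure_Ioc_lt_top))
      hf₁_meas.restrict
    refine (ae_restrict_iff' measurableSet_uIoc).mpr (Eventually.of_forall ?_)
    intro x hx
    rw [hf₁def]
    by_cases hx0 : x ∈ Ioi (0:ℝ)
    · rw [indicator_of_mem hx0]
      have hxpos : 0 < x := hx0
      have hxc : x ≤ c := le_trans hx.2 (le_max_left _ _)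
      have hrb := hC x ⟨le_of_lt hxpos, hxc⟩
      obtain ⟨hI0, hIM⟩ := hHbarI_bds x hxpos
      rw [Real.norm_eq_abs, abs_mul]
      have h1 : |r x| ≤ max C 0 := le_trans hrb (le_max_left _ _)
      have h2 : |HbarI x| ≤ M := by rw [abs_of_nonneg hI0]; exact hIM
      have := mul_le_mul h1 h2 (abs_nonneg _) (le_max_right C 0)
      exact this
    · rw [indicator_of_notMem hx0, Real.norm_eq_abs, abs_zero]
      positivity
  -- the first Karamata application
  have hA1 : Tendsto (fun x => f₁ x / (x ^ ρ * ℓ x)) atTop (nhds (K * (1/(αsess-1)))) := by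
    have hKt := htail.const_mul K
    apply hKt.congr'
    filter_upwards [eventually_gt_atTop (0:ℝ)] with x hx0
    have hmem : x ∈ Ioi (0:ℝ) := hx0
    have hLrx := hLr.2.1 x hx0
    have hLVx := hLV.2.1 x hx0
    have hxαm : (0:ℝ) < x ^ (1-αmin) := Real.rpow_pos_of_pos hx0 _
    have hxαs : (0:ℝ) < x ^ (1-αsess) := Real.rpow_pos_of_pos hx0 _
    have hxsplit : x ^ ρ = x ^ (1-αmin) * x ^ (1-αsess) := by
      rw [← Real.rpow_add hx0]
      congr 1
      rw [hρdef]; ring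
    rw [hf₁def]
    simp only [indicator_of_mem hmem]
    rw [hr x hx0, hℓdef]
    simp only
    rw [hxsplit]
    have hstep : K * x ^ (1 - αmin) * L_r x * HbarI x
          / (x ^ (1 - αmin) * x ^ (1 - αsess) * (L_V x * L_r x))
        = (x ^ (1-αmin) * L_r x) * (K * HbarI x)
          / ((x ^ (1-αmin) * L_r x) * (x ^ (1-αsess) * L_V x)) := by
      ring
    rw [hstep, mul_div_mul_left _ _ (by positivity), mul_div_assoc]
  have hkar1 := karamata ℓ hℓsv hρ1 f₁ hf₁_meas (fun t _ => hf₁_int 0 t) hA1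
  -- primitive
  set F : ℝ → ℝ := fun y => ∫ x in (0:ℝ)..y, f₁ x with hFdef
  have hFcont : Continuous F := intervalIntegral.continuous_primitive hf₁_int 0
  have hkar2 := karamata ℓ hℓsv (show (-1:ℝ) < ρ + 1 by linarith) F
    hFcont.aestronglyMeasurable (fun t _ => hFcont.intervalIntegrable 0 t) hkar1
  rw [show ρ + 1 + 1 = 4 - αmin - αsess from by rw [hρdef]; ring] at hkar2
  -- positivity of σ2
  have h3s : (0:ℝ) < 3 - αmin - αsess := by rw [hρdef] at hρ1; linarith
  have h4s : (0:ℝ) < 4 - αmin - αsess := by linarith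
  have hσ2pos : 0 < σ2 := by
    rw [hσ2]
    have h3 : (0:ℝ) < 3 - αmin := by linarith
    have h4 : (0:ℝ) < 2 - αmin := by linarith
    have h5 : (0:ℝ) < αsess - 1 := by linarith
    positivity
  have hσ2ne : σ2 ≠ 0 := ne_of_gt hσ2pos
  -- the limit constant identity
  have hconst : 2 * (K * (1/(αsess-1)) / (ρ+1) / (4 - αmin - αsess)) = σ2 := by
    rw [hσ2, hKdef, show ρ + 1 = 3 - αmin - αsess from by rw [hρdef]; ring]
    have h5 : (αsess - 1) ≠ 0 := by intro h; linarith
    have h6 : (3 - αmin - αsess) ≠ 0 := ne_of_gt h3s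
    have h7 : (4 - αmin - αsess) ≠ 0 := ne_of_gt h4s
    field_simp
  -- conclude
  have hfin := (hkar2.const_mul (2:ℝ)).mul_const σ2⁻¹
  rw [hconst, mul_inv_cancel₀ hσ2ne] at hfin
  apply hfin.congr'
  filter_upwards [eventually_gt_atTop (0:ℝ)] with t ht0
  -- V t = 2 * ∫ F
  have hVF : V t = 2 * ∫ y in (0:ℝ)..t, F y := by
    rw [hV t]
    congr 1
    apply intervalIntegral.integral_congr
    intro y hy
    rw [uIcc_of_le (le_of_lt ht0)] at hy
    simp only [hFdef]
    apply intervalIntegral.integral_congr_ae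
    apply Eventually.of_forall
    intro x hx
    rw [uIoc_of_le hy.1] at hx
    rw [hf₁def]
    exact (Set.indicator_of_mem hx.1 (fun x => r x * HbarI x)).symm
  have hLrt := hLr.2.1 t ht0
  have hLVt := hLV.2.1 t ht0
  have htγ : (0:ℝ) < t ^ (4 - αmin - αsess) := Real.rpow_pos_of_pos ht0 _
  have hD : (0:ℝ) < t ^ (4 - αmin - αsess) * (L_V t * L_r t) := by positivity
  have hc : 2 * σ2⁻¹ / (t ^ (4 - αmin - αsess) * (L_V t * L_r t))
      = 2 / (σ2 * t ^ (4 - αmin - αsess) * L_V t * L_r t) := by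
    rw [div_eq_div_iff (ne_of_gt hD) (by positivity)]
    field_simp
  rw [hVF, hℓdef]
  simp only
  calc 2 * ((∫ x in (0:ℝ)..t, F x) / (t ^ (4 - αmin - αsess) * (L_V t * L_r t))) * σ2⁻¹
      = (∫ x in (0:ℝ)..t, F x)
        * (2 * σ2⁻¹ / (t ^ (4 - αmin - αsess) * (L_V t * L_r t))) := by ring
    _ = (∫ x in (0:ℝ)..t, F x)
        * (2 / (σ2 * t ^ (4 - αmin - αsess) * L_V t * L_r t)) := by rw [hc]
    _ = 2 * (∫ x in (0:ℝ)..t, F x) / (σ2 * t ^ (4 - αmin - αsess) * L_V t * L_r t) := by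
        ring
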